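/- For an n×n real matrix A and p×n matrix C, the matrix Y₂(T) = ∫ τ in 0..T, exp(Aᵀ τ) Cᵀ C exp(A τ) dτ is symmetric positive semidefinite for every T ≥ 0, and if the pair (C, A) is observable (i.e., ⋂_{k<n} ker(C A^k) = {0}) and T > 0 then Y₂(T) is positive definite. -/

import Mathlib

open Matrix NormedSpace Set

open Filter

section helpers

variable {n p : ℕ}

private lemma expSlope (A : Matrix (Fin n) (Fin n) ℝ) (s : ℝ) :
    Tendsto (slope (fun τ : ℝ => exp (τ • A)) s) (nhdsWithin s {s}ᶜ)
      (nhds (exp (s • A) * A)) := by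
  letI : SeminormedRing (Matrix (Fin n) (Fin n) ℝ) := Matrix.linftyOpSemiNormedRing
  letI : NormedRing (Matrix (Fin n) (Fin n) ℝ) := Matrix.linftyOpNormedRing
  letI : NormedAlgebra ℝ (Matrix (Fin n) (Fin n) ℝ) := Matrix.linftyOpNormedAlgebra
  exact hasDerivAt_iff_tendsto_slope.mp (hasDerivAt_exp_smul_const (𝕂 := ℝ) A s)

private lemma expCont0 (A : Matrix (Fin n) (Fin n) ℝ) :
    Continuous fun τ : ℝ => exp (τ • A) := by
  letI : SeminormedRing (Matrix (Fin n) (Fin n) ℝ) := Matrix.linftyOpSemiNormedRing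
  letI : NormedRing (Matrix (Fin n) (Fin n) ℝ) := Matrix.linftyOpNormedRing
  letI : NormedAlgebra ℝ (Matrix (Fin n) (Fin n) ℝ) := Matrix.linftyOpNormedAlgebra
  exact continuous_iff_continuousAt.2 fun s => (hasDerivAt_exp_smul_const (𝕂 := ℝ) A s).continuousAt

private lemma expCommA (A : Matrix (Fin n) (Fin n) ℝ) (s : ℝ) :
    exp (s • A) * A = A * exp (s • A) :=
  (((Commute.refl A).smul_left s).exp_left).eq

end helpers

attribute [local instance] Matrix.normedAddCommGroup Matrix.normedSpace

section clm

variable {n p : ℕ}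

/-- `M ↦ (B * M) *ᵥ v` as a continuous linear map. -/
private noncomputable def mulVecCLM (B : Matrix (Fin p) (Fin n) ℝ) (v : Fin n → ℝ) :
    Matrix (Fin n) (Fin n) ℝ →L[ℝ] (Fin p → ℝ) :=
  LinearMap.toContinuousLinearMap
    { toFun := fun M => (B * M).mulVec v
      map_add' := fun M N => by simp [Matrix.mul_add, Matrix.add_mulVec]
      map_smul' := fun a M => by simp [Matrix.mul_smul, Matrix.smul_mulVec] }

/-- `M ↦ v ⬝ᵥ M *ᵥ v` as a continuous linear map. -/
private noncomputable def qFormCLM (v : Fin n → ℝ) :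
    Matrix (Fin n) (Fin n) ℝ →L[ℝ] ℝ :=
  LinearMap.toContinuousLinearMap
    { toFun := fun M => v ⬝ᵥ M.mulVec v
      map_add' := fun M N => by simp [Matrix.add_mulVec, dotProduct_add]
      map_smul' := fun a M => by simp [Matrix.smul_mulVec, dotProduct_smul] }

/-- Transpose as a continuous linear map. -/
private noncomputable def trCLM :
    Matrix (Fin n) (Fin n) ℝ →L[ℝ] Matrix (Fin n) (Fin n) ℝ :=
  LinearMap.toContinuousLinearMap
    { toFun := fun M => Mᵀ
      map_add' := fun M N => Matrix.transpose_add M N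
      map_smul' := fun a M => Matrix.transpose_smul a M }

private lemma hasDerivAt_BexpVec (A : Matrix (Fin n) (Fin n) ℝ)
    (B : Matrix (Fin p) (Fin n) ℝ) (v : Fin n → ℝ) (s : ℝ) :
    HasDerivAt (fun τ : ℝ => (B * exp (τ • A)).mulVec v)
      ((B * (exp (s • A) * A)).mulVec v) s := by
  have hexp : HasDerivAt (fun τ : ℝ => exp (τ • A)) (exp (s • A) * A) s :=
    hasDerivAt_iff_tendsto_slope.mpr (expSlope A s)
  exact (mulVecCLM B v).hasFDerivAt.comp_hasDerivAt s hexp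

private lemma cont_BexpVec (A : Matrix (Fin n) (Fin n) ℝ)
    (B : Matrix (Fin p) (Fin n) ℝ) (v : Fin n → ℝ) :
    Continuous fun τ : ℝ => (B * exp (τ • A)).mulVec v :=
  (mulVecCLM B v).continuous.comp (expCont0 A)

end clm

/-- `Y₂(T) = ∫ τ in 0..T, exp(Aᵀ τ) Cᵀ C exp(A τ)` is symmetric positive semidefinite for
`T ≥ 0`, and positive definite for `T > 0` when `(C, A)` is observable. -/
theorem stmt11 {n p : ℕ} (A : Matrix (Fin n) (Fin n) ℝ) (C : Matrix (Fin p) (Fin n) ℝ) :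
    (∀ T : ℝ, 0 ≤ T →
      (∫ τ in (0 : ℝ)..T, exp (τ • Aᵀ) * (Cᵀ * C) * exp (τ • A)).IsSymm ∧
      ∀ v : Fin n → ℝ,
        0 ≤ v ⬝ᵥ (∫ τ in (0 : ℝ)..T, exp (τ • Aᵀ) * (Cᵀ * C) * exp (τ • A)).mulVec v) ∧
    ((∀ v : Fin n → ℝ, (∀ k < n, (C * A ^ k).mulVec v = 0) → v = 0) →
      ∀ T : ℝ, 0 < T → ∀ v : Fin n → ℝ, v ≠ 0 →
        0 < v ⬝ᵥ (∫ τ in (0 : ℝ)..T, exp (τ • Aᵀ) * (Cᵀ * C) * exp (τ • A)).mulVec v) := by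
  have hFeq : ∀ τ : ℝ, exp (τ • Aᵀ) * (Cᵀ * C) * exp (τ • A)
      = (C * exp (τ • A))ᵀ * (C * exp (τ • A)) := by
    intro τ
    rw [← Matrix.transpose_smul, Matrix.exp_transpose]
    simp only [Matrix.transpose_mul, Matrix.mul_assoc]
  have hGcont : Continuous fun τ : ℝ =>
      (C * exp (τ • A))ᵀ * (C * exp (τ • A)) := by
    have h1 : Continuous fun τ : ℝ => C * exp (τ • A) :=
      continuous_const.matrix_mul (expCont0 A)
    exact h1.matrix_transpose.matrix_mul h1
  letI : ENormedAddMonoid (Matrix (Fin n) (Fin n) ℝ) := inferInstanceAs (ENormedAddMonoid (Fin n → Fin n → ℝ))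
  have hGint : ∀ a b : ℝ, IntervalIntegrable
      (fun τ : ℝ => (C * exp (τ • A))ᵀ * (C * exp (τ • A)))
      MeasureTheory.volume a b := fun a b => hGcont.intervalIntegrable a b
  have hIeq : ∀ T : ℝ, (∫ τ in (0 : ℝ)..T, exp (τ • Aᵀ) * (Cᵀ * C) * exp (τ • A))
      = ∫ τ in (0 : ℝ)..T, (C * exp (τ • A))ᵀ * (C * exp (τ • A)) := fun T =>
    intervalIntegral.integral_congr fun τ _ => hFeq τ
  have quad : ∀ (M : Matrix (Fin p) (Fin n) ℝ) (v : Fin n → ℝ),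
      v ⬝ᵥ (Mᵀ * M).mulVec v = M.mulVec v ⬝ᵥ M.mulVec v := by
    intro M v
    rw [← Matrix.mulVec_mulVec, Matrix.dotProduct_mulVec, Matrix.vecMul_transpose]
  have hptn : ∀ (u : Fin p → ℝ), 0 ≤ u ⬝ᵥ u := fun u =>
    Finset.sum_nonneg fun i _ => mul_self_nonneg (u i)
  have hq : ∀ (T : ℝ) (v : Fin n → ℝ),
      v ⬝ᵥ (∫ τ in (0 : ℝ)..T, (C * exp (τ • A))ᵀ * (C * exp (τ • A))).mulVec v
      = ∫ τ in (0 : ℝ)..T,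
          ((C * exp (τ • A)).mulVec v) ⬝ᵥ ((C * exp (τ • A)).mulVec v) := by
    intro T v
    have h := (qFormCLM v).intervalIntegral_comp_comm (hGint 0 T)
    exact h.symm.trans (intervalIntegral.integral_congr fun τ _ =>
      quad (C * exp (τ • A)) v)
  constructor
  · intro T hT
    constructor
    · rw [hIeq T]
      show (∫ τ in (0 : ℝ)..T, (C * exp (τ • A))ᵀ * (C * exp (τ • A)))ᵀ = _
      have h := (trCLM).intervalIntegral_comp_comm (hGint 0 T)
      refine h.symm.trans ?_
      exact intervalIntegral.integral_congr fun τ _ => by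
        show ((C * exp (τ • A))ᵀ * (C * exp (τ • A)))ᵀ = _
        rw [Matrix.transpose_mul, Matrix.transpose_transpose]
    · intro v
      rw [hIeq T, hq T v]
      exact intervalIntegral.integral_nonneg hT fun u _ => hptn _
  · intro hobs T hT v hv
    rw [hIeq T, hq T v]
    set g : ℝ → ℝ := fun τ =>
      ((C * exp (τ • A)).mulVec v) ⬝ᵥ ((C * exp (τ • A)).mulVec v) with hgdef
    have hgc : Continuous g := by
      have h1 := cont_BexpVec A C v
      exact h1.dotProduct h1
    have hgnn : ∀ τ : ℝ, 0 ≤ g τ := fun τ => hptn _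
    have hgint : ∀ a b : ℝ, IntervalIntegrable g MeasureTheory.volume a b :=
      fun a b => hgc.intervalIntegrable a b
    have h0 : 0 ≤ ∫ τ in (0 : ℝ)..T, g τ :=
      intervalIntegral.integral_nonneg hT.le fun u _ => hgnn u
    rcases h0.lt_or_eq with h | h
    · exact h
    exfalso
    -- h : 0 = ∫ g
    have hIcc : ∀ s ∈ Icc (0 : ℝ) T, (∫ τ in (0 : ℝ)..s, g τ) = 0 := by
      intro s hs
      have h1 : 0 ≤ ∫ τ in (0 : ℝ)..s, g τ :=
        intervalIntegral.integral_nonneg hs.1 fun u _ => hgnn u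
      have h2 : 0 ≤ ∫ τ in s..T, g τ :=
        intervalIntegral.integral_nonneg hs.2 fun u _ => hgnn u
      have h3 := intervalIntegral.integral_add_adjacent_intervals (hgint 0 s) (hgint s T)
      linarith
    have hIoo : ∀ s ∈ Ioo (0 : ℝ) T, g s = 0 := by
      intro s hs
      have hd : HasDerivAt (fun u : ℝ => ∫ τ in (0 : ℝ)..u, g τ) (g s) s :=
        (hgc.integral_hasStrictDerivAt 0 s).hasDerivAt
      have hz : HasDerivAt (fun u : ℝ => ∫ τ in (0 : ℝ)..u, g τ) 0 s := by
        have hev : (fun u : ℝ => ∫ τ in (0 : ℝ)..u, g τ) =ᶠ[nhds s] fun _ => (0 : ℝ) :=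
          eventuallyEq_of_mem (Ioo_mem_nhds hs.1 hs.2) fun u hu =>
            hIcc u (Ioo_subset_Icc_self hu)
        exact (hasDerivAt_const s (0 : ℝ)).congr_of_eventuallyEq hev
      exact hd.unique hz
    have hW : ∀ s ∈ Ioo (0 : ℝ) T, (C * exp (s • A)).mulVec v = 0 := fun s hs =>
      dotProduct_self_eq_zero.mp (hIoo s hs)
    have hk : ∀ k : ℕ, ∀ s ∈ Ioo (0 : ℝ) T, ((C * A ^ k) * exp (s • A)).mulVec v = 0 := by
      intro k
      induction k with
      | zero => simpa using hW
      | succ k ih =>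
        intro s hs
        have hd := hasDerivAt_BexpVec A (C * A ^ k) v s
        have hz : HasDerivAt (fun u : ℝ => ((C * A ^ k) * exp (u • A)).mulVec v) 0 s := by
          have hev : (fun u : ℝ => ((C * A ^ k) * exp (u • A)).mulVec v)
              =ᶠ[nhds s] fun _ => (0 : Fin p → ℝ) :=
            eventuallyEq_of_mem (Ioo_mem_nhds hs.1 hs.2) fun u hu => ih u hu
          exact (hasDerivAt_const s (0 : Fin p → ℝ)).congr_of_eventuallyEq hev
        have h4 := hd.unique hz
        have h5 : (C * A ^ (k + 1)) * exp (s • A) = (C * A ^ k) * (exp (s • A) * A) := by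
          rw [expCommA A s, pow_succ]
          simp only [Matrix.mul_assoc]
        rw [h5]
        exact h4
    have hks : ∀ k : ℕ, (C * A ^ k).mulVec v = 0 := by
      intro k
      have hc := cont_BexpVec A (C * A ^ k) v
      have heq : EqOn (fun s : ℝ => ((C * A ^ k) * exp (s • A)).mulVec v)
          (fun _ => (0 : Fin p → ℝ)) (closure (Ioo (0 : ℝ) T)) :=
        Set.EqOn.closure (fun s hs => hk k s hs) hc continuous_const
      have h6 : ((C * A ^ k) * exp ((0 : ℝ) • A)).mulVec v = 0 := by
        apply heq
        rw [closure_Ioo hT.ne]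
        exact ⟨le_refl 0, hT.le⟩
      simpa using h6
    exact hv (hobs v fun k _ => hks k)
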